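/- Let r ≥ 3 and n ≥ r. If t copies of the complete graph K_r can be deleted from K_n (i.e., all edges lying inside each of t chosen r-element vertex subsets are removed) so that the resulting graph on n vertices is not Hamiltonian, then t ≥ n(n−1)/((n+2r)(r−1)). Equivalently, for x = (2,1,…,1) with r−2 ones, m(x,n) ≥ n(n−1)/((n+2r)(r−1)). -/

import Mathlib

/-- A Hamilton cycle in the complete graph `K_n` is modelled as a cyclic ordering of the
vertex set, i.e. a bijection `c : ZMod n ≃ Fin n`; the vertices of the cycle in cyclic
order are `c 0, c 1, …, c (n-1)`.  `cycInterval c t x` is the interval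
`{c (t+1), c (t+2), …, c (t+x)}` of `x` consecutive vertices of the cycle. -/
def cycInterval {n : ℕ} (c : ZMod n ≃ Fin n) (t : ZMod n) (x : ℕ) : Finset (Fin n) :=
  (Finset.range x).image fun i : ℕ => c (t + (i : ZMod n) + 1)

/-- Given a vector `x = (x₁, …, x_k)` of positive integers and a family `F` of subsets
of the vertex set, a Hamilton cycle `c` of `K_n` is `x`-*acceptable* for `F` if there
do not exist `t₁, …, t_k` such that the union
`⋃ i, {c (tᵢ+1), …, c (tᵢ+xᵢ)}` is an element of `F`. -/
def IsXAcceptable {n k : ℕ} (x : Fin k → ℕ) (F : Set (Finset (Fin n)))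
    (c : ZMod n ≃ Fin n) : Prop :=
  ¬ ∃ t : Fin k → ZMod n,
      (Finset.univ.biUnion fun i : Fin k => cycInterval c (t i) (x i)) ∈ F

/-- `mxn x n` is the size of the smallest family `F` of `r`-element subsets of `[n]`
(where `r = x₁ + ⋯ + x_k`) such that `K_n` has no `x`-acceptable Hamilton cycle with
respect to `F`. -/
noncomputable def mxn {k : ℕ} (x : Fin k → ℕ) (n : ℕ) : ℕ :=
  sInf {m : ℕ | ∃ F : Set (Finset (Fin n)),
    (∀ A ∈ F, A.card = ∑ i : Fin k, x i) ∧ F.ncard = m ∧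
    ∀ c : ZMod n ≃ Fin n, ¬ IsXAcceptable x F c}



open SimpleGraph Finset
open scoped Classical

variable {n : ℕ} {G : SimpleGraph (Fin n)}

/-- Build a walk following `f 0, f 1, ..., f k`. -/
def buildWalk (f : ℕ → Fin n) (hf : ∀ k, G.Adj (f k) (f (k+1))) :
    (k : ℕ) → G.Walk (f 0) (f k)
  | 0 => .nil
  | k+1 => (buildWalk f hf k).concat (hf k)

lemma buildWalk_support (f : ℕ → Fin n) (hf : ∀ k, G.Adj (f k) (f (k+1))) (k : ℕ) :
    (buildWalk f hf k).support = (List.range (k+1)).map f := by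
  induction k with
  | zero => simp [buildWalk, List.range_succ]
  | succ k ih =>
      rw [buildWalk, SimpleGraph.Walk.support_concat, ih, List.range_succ (n := k+1)]
      simp

lemma buildWalk_edges (f : ℕ → Fin n) (hf : ∀ k, G.Adj (f k) (f (k+1))) (k : ℕ) :
    (buildWalk f hf k).edges = (List.range k).map (fun j => s(f j, f (j+1))) := by
  induction k with
  | zero => simp [buildWalk]
  | succ k ih =>
      rw [buildWalk, SimpleGraph.Walk.edges_concat, ih, List.range_succ (n := k)]
      simp

/-- From a good cyclic ordering, get a Hamiltonian cycle. -/
lemma ham_of_good {m : ℕ} {G : SimpleGraph (Fin (m+1))} (hn : 3 ≤ m + 1)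
    (σ : ZMod (m+1) ≃ Fin (m+1))
    (h : ∀ j : ZMod (m+1), G.Adj (σ j) (σ (j+1))) :
    ∃ (v : Fin (m+1)) (p : G.Walk v v), p.IsHamiltonianCycle := by
  haveI : NeZero (m+1) := ⟨by omega⟩
  have hf : ∀ k : ℕ, G.Adj (σ (k : ZMod (m+1))) (σ ((k+1 : ℕ) : ZMod (m+1))) := by
    intro k
    have := h (k : ZMod (m+1))
    simpa using this
  set f : ℕ → Fin (m+1) := fun k => σ (k : ZMod (m+1)) with hfdef
  have hf' : ∀ k, G.Adj (f k) (f (k+1)) := hf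
  have hfn : f (m+1) = f 0 := by simp [hfdef]
  have hinj : ∀ a b : ℕ, a < m+1 → b < m+1 → f a = f b → a = b := by
    intro a b ha hb hab
    have : (a : ZMod (m+1)) = (b : ZMod (m+1)) := σ.injective hab
    have := congrArg ZMod.val this
    rwa [ZMod.val_cast_of_lt ha, ZMod.val_cast_of_lt hb] at this
  let W : G.Walk (f 0) (f (m+1)) := buildWalk f hf' (m+1)
  let C : G.Walk (f 0) (f 0) := W.copy rfl hfn
  have hCsupp : C.support = (List.range (m+2)).map f := by
    simpa [C, W] using buildWalk_support f hf' (m+1)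
  have hCedges : C.edges = (List.range (m+1)).map (fun j => s(f j, f (j+1))) := by
    simpa [C, W] using buildWalk_edges f hf' (m+1)
  have hCtail : C.support.tail = (List.range (m+1)).map (fun j => f (j+1)) := by
    rw [hCsupp, show m + 2 = (m+1) + 1 from rfl, List.range_succ_eq_map]
    simp [Function.comp]
  have htail_nodup : C.support.tail.Nodup := by
    rw [hCtail]
    refine List.Nodup.map_on ?_ List.nodup_range
    intro a ha b hb hab
    simp only [List.mem_range] at ha hb
    have e : ((a:ℕ) : ZMod (m+1)) + 1 = ((b:ℕ) : ZMod (m+1)) + 1 := by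
      have := σ.injective hab
      push_cast at this
      simpa using this
    have e2 : ((a:ℕ) : ZMod (m+1)) = ((b:ℕ) : ZMod (m+1)) := by
      exact add_right_cancel e
    have := congrArg ZMod.val e2
    rwa [ZMod.val_cast_of_lt ha, ZMod.val_cast_of_lt hb] at this
  have hsupplen : C.support.length = m + 2 := by rw [hCsupp]; simp
  have hCnil : C ≠ SimpleGraph.Walk.nil := by
    intro hC
    rw [hC] at hsupplen
    simp at hsupplen
  have hCycle : C.IsCycle := by
    rw [SimpleGraph.Walk.isCycle_def]
    refine ⟨⟨?_⟩, hCnil, htail_nodup⟩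
    rw [hCedges]
    refine List.Nodup.map_on ?_ List.nodup_range
    intro a ha b hb hab
    simp only [List.mem_range] at ha hb
    rw [Sym2.eq_iff] at hab
    rcases hab with ⟨h1, _⟩ | ⟨h1, h2⟩
    · exact hinj a b (by omega) (by omega) h1
    · exfalso
      have e1 : ((a : ZMod (m+1))) = ((b : ZMod (m+1)) + 1) := by
        have := σ.injective h1
        simpa using this
      have e2 : ((a : ZMod (m+1)) + 1) = (b : ZMod (m+1)) := by
        have := σ.injective h2
        simpa using this
      have h20 : ((2 : ℕ) : ZMod (m+1)) = 0 := by
        push_cast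
        linear_combination e2 - e1
      rw [ZMod.natCast_eq_zero_iff] at h20
      have := Nat.le_of_dvd (by omega) h20
      omega
  have hnotNil : ¬ C.Nil := by
    intro hC
    rw [SimpleGraph.Walk.nil_iff_length_eq] at hC
    rw [SimpleGraph.Walk.length_support, hC] at hsupplen
    omega
  refine ⟨f 0, C, hCycle, ?_⟩
  intro a
  rw [SimpleGraph.Walk.support_tail_of_not_nil C hnotNil, hCtail]
  apply List.count_eq_one_of_mem
  · rw [← hCtail]; exact htail_nodup
  · simp only [List.mem_map, List.mem_range]
    set z := σ.symm a with hz
    have ha : σ z = a := σ.apply_symm_apply a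
    by_cases h0 : z.val = 0
    · refine ⟨m, by omega, ?_⟩
      have hz0 : z = 0 := (ZMod.val_eq_zero z).mp h0
      show σ (((m+1 : ℕ) : ZMod (m+1))) = a
      rw [show ((m+1 : ℕ) : ZMod (m+1)) = 0 by simp, ← hz0, ha]
    · have hvlt : z.val < m+1 := z.val_lt
      refine ⟨z.val - 1, by omega, ?_⟩
      show σ (((z.val - 1 + 1 : ℕ) : ZMod (m+1))) = a
      rw [show z.val - 1 + 1 = z.val by omega, ZMod.natCast_zmod_val, ha]


def Good {n : ℕ} (G : SimpleGraph (Fin n)) (σ : ZMod n ≃ Fin n) : Prop :=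
  ∀ j : ZMod n, G.Adj (σ j) (σ (j + 1))

def HamOrd {n : ℕ} (G : SimpleGraph (Fin n)) : Prop := ∃ σ, Good G σ

noncomputable def degC {n : ℕ} (G : SimpleGraph (Fin n)) (w : Fin n) : ℕ :=
  (Finset.univ.filter (fun x => G.Adj w x)).card

lemma rotation_ham {m : ℕ} (hn : 3 ≤ m + 1) (G : SimpleGraph (Fin (m+1)))
    (u v : Fin (m+1)) (hne : u ≠ v) (hnadj : ¬ G.Adj u v)
    (σ : ZMod (m+1) ≃ Fin (m+1)) (j₀ : ZMod (m+1))
    (hv : σ j₀ = v) (hu : σ (j₀ + 1) = u)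
    (hcases : ∀ j : ZMod (m+1), G.Adj (σ j) (σ (j+1)) ∨
      (σ j = v ∧ σ (j+1) = u) ∨ (σ j = u ∧ σ (j+1) = v))
    (hdeg : m + 1 ≤ degC G u + degC G v) : HamOrd G := by
  haveI : NeZero (m+1) := ⟨by omega⟩
  have h2ne : ((2:ℕ) : ZMod (m+1)) ≠ 0 := by
    intro h
    rw [ZMod.natCast_eq_zero_iff] at h
    have := Nat.le_of_dvd (by omega) h
    omega
  have hgood' : ∀ j : ZMod (m+1), j ≠ j₀ → G.Adj (σ j) (σ (j+1)) := by
    intro j hj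
    rcases hcases j with h | ⟨h1, _⟩ | ⟨h1, h2⟩
    · exact h
    · exact absurd (σ.injective (h1.trans hv.symm)) hj
    · exfalso
      have hj1 : j = j₀ + 1 := σ.injective (h1.trans hu.symm)
      have : σ (j₀ + 1 + 1) = σ j₀ := by rw [← hj1, h2, hv]
      have h' := σ.injective this
      have h2 : ((2:ℕ) : ZMod (m+1)) = 0 := by
        push_cast
        linear_combination h'
      exact h2ne h2
  set q : ℕ → Fin (m+1) := fun k => σ (j₀ + 1 + (k : ZMod (m+1))) with hqdef
  have hq0 : q 0 = u := by simp [hqdef, hu]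
  have hm0 : ((m:ℕ) : ZMod (m+1)) + 1 = 0 := by
    have h' : ((m+1:ℕ) : ZMod (m+1)) = 0 := ZMod.natCast_self _
    push_cast at h'
    linear_combination h'
  have hqm : q m = v := by
    show σ (j₀ + 1 + ((m:ℕ) : ZMod (m+1))) = v
    rw [show j₀ + 1 + ((m:ℕ) : ZMod (m+1)) = j₀ + (((m:ℕ) : ZMod (m+1)) + 1) by ring,
      hm0, add_zero, hv]
  have hqinj : ∀ a b : ℕ, a < m+1 → b < m+1 → q a = q b → a = b := by
    intro a b ha hb hab
    have h1 : j₀ + 1 + ((a:ℕ) : ZMod (m+1)) = j₀ + 1 + ((b:ℕ) : ZMod (m+1)) :=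
      σ.injective hab
    have h2 : ((a:ℕ) : ZMod (m+1)) = ((b:ℕ) : ZMod (m+1)) := by
      exact add_left_cancel h1
    have := congrArg ZMod.val h2
    rwa [ZMod.val_cast_of_lt ha, ZMod.val_cast_of_lt hb] at this
  have hqadj : ∀ k : ℕ, k < m → G.Adj (q k) (q (k+1)) := by
    intro k hk
    have hne' : j₀ + 1 + ((k:ℕ) : ZMod (m+1)) ≠ j₀ := by
      intro he
      have h2 : ((k+1:ℕ) : ZMod (m+1)) = 0 := by push_cast; linear_combination he
      rw [ZMod.natCast_eq_zero_iff] at h2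
      have := Nat.le_of_dvd (by omega) h2
      omega
    have := hgood' _ hne'
    have harg : j₀ + 1 + ((k:ℕ) : ZMod (m+1)) + 1 = j₀ + 1 + ((k+1:ℕ) : ZMod (m+1)) := by
      push_cast; ring
    rw [harg] at this
    exact this
  have hqsurj : ∀ w : Fin (m+1), ∃ k : ℕ, k < m + 1 ∧ q k = w := by
    intro w
    refine ⟨(σ.symm w - (j₀ + 1)).val, ZMod.val_lt _, ?_⟩
    show σ (j₀ + 1 + (((σ.symm w - (j₀ + 1)).val : ℕ) : ZMod (m+1))) = w
    rw [ZMod.natCast_zmod_val]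
    rw [show j₀ + 1 + (σ.symm w - (j₀ + 1)) = σ.symm w by ring]
    exact σ.apply_symm_apply w
  -- pigeonhole
  set A : Finset ℕ := (Finset.range m).filter (fun k => G.Adj u (q (k+1))) with hA
  set B : Finset ℕ := (Finset.range m).filter (fun k => G.Adj v (q k)) with hB
  have hAcard : A.card = degC G u := by
    rw [degC]
    apply Finset.card_bij (fun k _ => q (k+1))
    · intro k hk
      simp only [hA, Finset.mem_filter, Finset.mem_range] at hk
      simp [hk.2]
    · intro k1 hk1 k2 hk2 he
      simp only [hA, Finset.mem_filter, Finset.mem_range] at hk1 hk2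
      have := hqinj (k1+1) (k2+1) (by omega) (by omega) he
      omega
    · intro w hw
      simp only [Finset.mem_filter, Finset.mem_univ, true_and] at hw
      obtain ⟨k₀, hk₀, hqk₀⟩ := hqsurj w
      have hk0ne : k₀ ≠ 0 := by
        intro h0
        rw [h0, hq0] at hqk₀
        exact (G.ne_of_adj hw) hqk₀
      refine ⟨k₀ - 1, ?_, ?_⟩
      · simp only [hA, Finset.mem_filter, Finset.mem_range]
        constructor
        · omega
        · rw [show k₀ - 1 + 1 = k₀ by omega, hqk₀]; exact hw
      · rw [show k₀ - 1 + 1 = k₀ by omega, hqk₀]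
  have hBcard : B.card = degC G v := by
    rw [degC]
    apply Finset.card_bij (fun k _ => q k)
    · intro k hk
      simp only [hB, Finset.mem_filter, Finset.mem_range] at hk
      simp [hk.2]
    · intro k1 hk1 k2 hk2 he
      simp only [hB, Finset.mem_filter, Finset.mem_range] at hk1 hk2
      exact hqinj k1 k2 (by omega) (by omega) he
    · intro w hw
      simp only [Finset.mem_filter, Finset.mem_univ, true_and] at hw
      obtain ⟨k₀, hk₀, hqk₀⟩ := hqsurj w
      have hk0ne : k₀ ≠ m := by
        intro h0
        rw [h0, hqm] at hqk₀
        exact (G.ne_of_adj hw) hqk₀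
      refine ⟨k₀, ?_, hqk₀⟩
      simp only [hB, Finset.mem_filter, Finset.mem_range]
      exact ⟨by omega, hqk₀ ▸ hw⟩
  have hABsub : A ∪ B ⊆ Finset.range m := by
    intro k hk
    rcases Finset.mem_union.mp hk with h | h
    · exact Finset.mem_of_mem_filter _ h
    · exact Finset.mem_of_mem_filter _ h
  have hinter : (A ∩ B).Nonempty := by
    by_contra hempty
    rw [Finset.not_nonempty_iff_eq_empty] at hempty
    have h1 : A.card + B.card = (A ∪ B).card := by
      rw [Finset.card_union_of_disjoint (Finset.disjoint_iff_inter_eq_empty.mpr hempty)]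
    have h2 : (A ∪ B).card ≤ m := by
      calc (A ∪ B).card ≤ (Finset.range m).card := Finset.card_le_card hABsub
      _ = m := Finset.card_range m
    omega
  obtain ⟨k, hk⟩ := hinter
  rw [Finset.mem_inter] at hk
  obtain ⟨hkA, hkB⟩ := hk
  simp only [hA, hB, Finset.mem_filter, Finset.mem_range] at hkA hkB
  have hklt : k < m := hkA.1
  have hAu : G.Adj u (q (k+1)) := hkA.2
  have hBv : G.Adj v (q k) := hkB.2
  have hkpos : k ≠ 0 := by
    intro h0
    rw [h0, hq0] at hBv
    exact hnadj (hBv.symm)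
  -- build the new ordering
  set ρ : ZMod (m+1) → Fin (m+1) :=
    fun z => if z.val ≤ k then q z.val else q (m + 1 + k - z.val) with hρ
  have hρinj : Function.Injective ρ := by
    intro z1 z2 he
    have hz1 : z1.val < m + 1 := z1.val_lt
    have hz2 : z2.val < m + 1 := z2.val_lt
    have hval : z1.val = z2.val := by
      simp only [hρ] at he
      split_ifs at he with h1 h2 h2
      · exact hqinj _ _ (by omega) (by omega) he
      · have := hqinj _ _ (by omega) (by omega) he
        omega
      · have := hqinj _ _ (by omega) (by omega) he
        omega
      · have := hqinj _ _ (by omega) (by omega) he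
        omega
    exact ZMod.val_injective _ hval
  have hρbij : Function.Bijective ρ := by
    rw [Fintype.bijective_iff_injective_and_card]
    exact ⟨hρinj, by simp [ZMod.card]⟩
  refine ⟨Equiv.ofBijective ρ hρbij, ?_⟩
  intro z
  show G.Adj (ρ z) (ρ (z + 1))
  have hzval : z.val < m + 1 := z.val_lt
  have hz1val : (z + 1).val = (z.val + 1) % (m + 1) := by
    conv_lhs => rw [show z = ((z.val : ℕ) : ZMod (m+1)) from (ZMod.natCast_zmod_val z).symm]
    rw [show (((z.val : ℕ) : ZMod (m+1)) + 1) = ((z.val + 1 : ℕ) : ZMod (m+1)) by push_cast; ring]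
    exact ZMod.val_natCast _ _
  by_cases hjm : z.val = m
  · -- wrap-around
    have h1 : (z+1).val = 0 := by rw [hz1val, hjm]; simp
    have hρz : ρ z = q (k+1) := by
      simp only [hρ, hjm]
      rw [if_neg (by omega), show m + 1 + k - m = k + 1 by omega]
    have hρz1 : ρ (z+1) = q 0 := by
      simp only [hρ, h1]
      rw [if_pos (by omega)]
    rw [hρz, hρz1, hq0]
    exact hAu.symm
  · have h1 : (z+1).val = z.val + 1 := by rw [hz1val, Nat.mod_eq_of_lt (by omega)]
    by_cases hjk : z.val < k
    · have hρz : ρ z = q z.val := by simp only [hρ]; rw [if_pos (by omega)]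
      have hρz1 : ρ (z+1) = q (z.val + 1) := by
        simp only [hρ, h1]; rw [if_pos (by omega)]
      rw [hρz, hρz1]
      exact hqadj z.val (by omega)
    · by_cases hjk2 : z.val = k
      · have hρz : ρ z = q k := by simp only [hρ, hjk2]; rw [if_pos (le_refl _)]
        have hρz1 : ρ (z+1) = q m := by
          simp only [hρ, h1, hjk2]
          rw [if_neg (by omega), show m + 1 + k - (k + 1) = m by omega]
        rw [hρz, hρz1, hqm]
        exact hBv.symm
      · -- k < z.val < m
        have hgt : k < z.val := by omega
        set i := m + k - z.val with hi
        have hρz : ρ z = q (i+1) := by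
          simp only [hρ]
          rw [if_neg (by omega), show m + 1 + k - z.val = i + 1 by omega]
        have hρz1 : ρ (z+1) = q i := by
          simp only [hρ, h1]
          rw [if_neg (by omega), show m + 1 + k - (z.val + 1) = i by omega]
        rw [hρz, hρz1]
        exact (hqadj i (by omega)).symm

lemma hamOrd_top {m : ℕ} (hn : 3 ≤ m + 1) : HamOrd (⊤ : SimpleGraph (Fin (m+1))) := by
  haveI : NeZero (m+1) := ⟨by omega⟩
  refine ⟨Fintype.equivFinOfCardEq (ZMod.card (m+1)), ?_⟩
  intro j
  simp only [SimpleGraph.top_adj]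
  intro h
  have := (Fintype.equivFinOfCardEq (ZMod.card (m+1))).injective h
  have h1 : ((1:ℕ) : ZMod (m+1)) = 0 := by
    push_cast
    linear_combination -this
  rw [ZMod.natCast_eq_zero_iff] at h1
  have := Nat.le_of_dvd (by omega) h1
  omega

lemma exists_maximal_nonham {n : ℕ} (G₀ : SimpleGraph (Fin n)) (h : ¬ HamOrd G₀) :
    ∃ G', G₀ ≤ G' ∧ ¬ HamOrd G' ∧ ∀ H, G' ≤ H → ¬ HamOrd H → H = G' := by
  obtain ⟨G', hmem, hmax⟩ := Set.Finite.exists_maximal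
    (Set.toFinite {H : SimpleGraph (Fin n) | G₀ ≤ H ∧ ¬ HamOrd H}) ⟨G₀, le_refl _, h⟩
  exact ⟨G', hmem.1, hmem.2,
    fun H hle hH => le_antisymm (hmax ⟨le_trans hmem.1 hle, hH⟩ hle) hle⟩

lemma ore_bound {m : ℕ} (hn : 3 ≤ m + 1) (G : SimpleGraph (Fin (m+1))) (hno : ¬ HamOrd G)
    (hmax : ∀ H, G ≤ H → ¬ HamOrd H → H = G)
    (u v : Fin (m+1)) (hne : u ≠ v) (hnadj : ¬ G.Adj u v) :
    degC G u + degC G v ≤ m := by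
  by_contra hcon
  have hdeg : m + 1 ≤ degC G u + degC G v := by omega
  set G'' := G ⊔ SimpleGraph.fromEdgeSet {s(u,v)} with hG''
  have hle : G ≤ G'' := le_sup_left
  have hG''uv : G''.Adj u v := by
    rw [hG'', SimpleGraph.sup_adj, SimpleGraph.fromEdgeSet_adj]
    exact Or.inr ⟨rfl, hne⟩
  have hham'' : HamOrd G'' := by
    by_contra hno''
    rw [hmax G'' hle hno''] at hG''uv
    exact hnadj hG''uv
  obtain ⟨σ, hσ⟩ := hham''
  have hcases : ∀ j : ZMod (m+1), G.Adj (σ j) (σ (j+1)) ∨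
      (σ j = v ∧ σ (j+1) = u) ∨ (σ j = u ∧ σ (j+1) = v) := by
    intro j
    have hj := hσ j
    rw [hG'', SimpleGraph.sup_adj] at hj
    rcases hj with h | h
    · exact Or.inl h
    · rw [SimpleGraph.fromEdgeSet_adj, Set.mem_singleton_iff, Sym2.eq_iff] at h
      rcases h.1 with ⟨h1, h2⟩ | ⟨h1, h2⟩
      · exact Or.inr (Or.inr ⟨h1, h2⟩)
      · exact Or.inr (Or.inl ⟨h1, h2⟩)
  by_cases hex : ∀ j : ZMod (m+1), G.Adj (σ j) (σ (j+1))
  · exact hno ⟨σ, hex⟩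
  · push_neg at hex
    obtain ⟨j, hj⟩ := hex
    rcases hcases j with h | ⟨h1, h2⟩ | ⟨h1, h2⟩
    · exact absurd h hj
    · exact hno (rotation_ham hn G u v hne hnadj σ j h1 h2 hcases hdeg)
    · -- reverse the ordering
      set c : ZMod (m+1) := j + (j + 1) with hc
      set τ : ZMod (m+1) ≃ Fin (m+1) := (Equiv.subLeft c).trans σ with hτ
      have hτeval : ∀ z, τ z = σ (c - z) := fun z => rfl
      have hτv : τ j = v := by rw [hτeval, show c - j = j + 1 by rw [hc]; ring, h2]
      have hτu : τ (j + 1) = u := by rw [hτeval, show c - (j+1) = j by rw [hc]; ring, h1]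
      have hcasesτ : ∀ j' : ZMod (m+1), G.Adj (τ j') (τ (j'+1)) ∨
          (τ j' = v ∧ τ (j'+1) = u) ∨ (τ j' = u ∧ τ (j'+1) = v) := by
        intro j'
        have e1 : τ j' = σ ((c - (j' + 1)) + 1) := by
          rw [hτeval]; congr 1; ring
        have e2 : τ (j' + 1) = σ (c - (j' + 1)) := by rw [hτeval]
        rcases hcases (c - (j' + 1)) with h | ⟨ha, hb⟩ | ⟨ha, hb⟩
        · exact Or.inl (by rw [e1, e2]; exact h.symm)
        · exact Or.inr (Or.inr ⟨by rw [e1, hb], by rw [e2, ha]⟩)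
        · exact Or.inr (Or.inl ⟨by rw [e1, hb], by rw [e2, ha]⟩)
      exact hno (rotation_ham hn G u v hne hnadj τ j hτv hτu hcasesτ hdeg)

section Counting
variable {n : ℕ}

lemma card_nonnbr (G : SimpleGraph (Fin n)) (w : Fin n) (NN : Finset (Fin n))
    (hNN : ∀ x, x ∈ NN ↔ (x ≠ w ∧ ¬ G.Adj w x)) :
    NN.card + degC G w + 1 = n := by
  classical
  have hNN' : NN = Finset.univ.filter (fun x => x ≠ w ∧ ¬ G.Adj w x) := by
    ext x
    simp [hNN x]
  have hsplit := Finset.card_filter_add_card_filter_not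
    (s := (Finset.univ : Finset (Fin n))) (fun x => G.Adj w x)
  have hrest : (Finset.univ.filter (fun x => ¬ G.Adj w x)) = insert w NN := by
    ext x
    simp only [Finset.mem_filter, Finset.mem_univ, true_and, Finset.mem_insert, hNN x]
    constructor
    · intro hx
      by_cases hxw : x = w
      · exact Or.inl hxw
      · exact Or.inr ⟨hxw, hx⟩
    · rintro (rfl | ⟨_, hx⟩)
      · exact G.irrefl
      · exact hx
  have hw : w ∉ NN := by
    rw [hNN w]
    simp
  have hcard : (Finset.univ.filter (fun x => ¬ G.Adj w x)).card = NN.card + 1 := by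
    rw [hrest, Finset.card_insert_of_notMem hw]
  have huniv : (Finset.univ : Finset (Fin n)).card = n := by simp
  have hdeg : degC G w = (Finset.univ.filter (fun x => G.Adj w x)).card := by
    rw [degC]
  rw [hdeg]
  omega

lemma degC_mono {G H : SimpleGraph (Fin n)} (h : G ≤ H) (w : Fin n) :
    degC G w ≤ degC H w := by
  apply Finset.card_le_card
  intro x hx
  simp only [Finset.mem_filter, Finset.mem_univ, true_and] at hx ⊢
  exact h hx

lemma arith_case1 (n r i x : ℤ) (hr : 3 ≤ r) (hrn : r ≤ n) (hi : 1 ≤ i) (hin : 2*i + 1 ≤ n)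
    (A : n - 1 - i ≤ x)
    (B : i*(n-1-i) + (n-2*i)*(r-1) ≤ r*x)
    (hcase : i ≤ r - 1) :
    n*(n-1) ≤ x*(n+2*r) := by
  nlinarith [sq_nonneg (i-1), sq_nonneg (n-1-i), mul_nonneg (sub_nonneg.2 hi) (sub_nonneg.2 hcase),
    sq_nonneg (n - 2*i), sq_nonneg (r-1-i)]

lemma arith_case2 (n r i x : ℤ) (hr : 3 ≤ r) (hrn : r ≤ n) (hi : 1 ≤ i) (hin : 2*i + 1 ≤ n)
    (A : n - 1 - i ≤ x)
    (B : i*(n-1-i) + (n-2*i)*i ≤ r*x)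
    (hcase : r - 1 ≤ i) :
    n*(n-1) ≤ x*(n+2*r) := by
  nlinarith [sq_nonneg (i-1), sq_nonneg (n-1-2*i), mul_nonneg (sub_nonneg.2 hcase) (sub_nonneg.2 hi),
    sq_nonneg (n - 2*i), sq_nonneg (r-1-i)]

/-- Main counting lemma: if every cyclic ordering is blocked by the family `S`,
then `t` is large. -/
lemma main_count {n r : ℕ} {ι : Type} [Fintype ι] (hr : 3 ≤ r) (hrn : r ≤ n)
    (S : ι → Finset (Fin n)) (hS : ∀ i, (S i).card = r)
    (hblock : ∀ σ : ZMod n ≃ Fin n, ∃ j : ZMod n, ∃ i, σ j ∈ S i ∧ σ (j+1) ∈ S i) :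
    n * (n - 1) ≤ (Fintype.card ι) * (r - 1) * (n + 2 * r) := by
  set t := Fintype.card ι with ht
  obtain ⟨m, rfl⟩ : ∃ m, n = m + 1 := ⟨n - 1, by omega⟩
  have hn3 : 3 ≤ m + 1 := by omega
  set G₀ : SimpleGraph (Fin (m+1)) :=
    { Adj := fun a b => a ≠ b ∧ ¬ ∃ i, a ∈ S i ∧ b ∈ S i
      symm := ⟨by
        intro a b ⟨h1, h2⟩
        exact ⟨h1.symm, fun ⟨i, hi1, hi2⟩ => h2 ⟨i, hi2, hi1⟩⟩⟩
      loopless := ⟨fun a ⟨h1, _⟩ => h1 rfl⟩ } with hG₀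
  have hG₀adj : ∀ a b, G₀.Adj a b ↔ (a ≠ b ∧ ¬ ∃ i, a ∈ S i ∧ b ∈ S i) := by
    intro a b
    rfl
  have hnoHam : ¬ HamOrd G₀ := by
    rintro ⟨σ, hσ⟩
    obtain ⟨j, i, h1, h2⟩ := hblock σ
    exact ((hG₀adj _ _).mp (hσ j)).2 ⟨i, h1, h2⟩
  obtain ⟨G', hle, hno', hmax⟩ := exists_maximal_nonham G₀ hnoHam
  classical
  set d : Fin (m+1) → ℕ := fun w => (Finset.univ.filter (fun i => w ∈ S i)).card with hd
  have hsum : ∑ w : Fin (m+1), d w = t * r := by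
    have h1 : ∀ w, d w = ∑ i : ι, if w ∈ S i then 1 else 0 :=
      fun w => Finset.card_filter _ _
    rw [Finset.sum_congr rfl fun w _ => h1 w, Finset.sum_comm]
    have h2 : ∀ i : ι, (∑ w : Fin (m+1), if w ∈ S i then 1 else 0) = r := by
      intro i
      rw [← Finset.card_filter]
      rw [show Finset.univ.filter (fun w => w ∈ S i) = S i by ext x; simp]
      exact hS i
    rw [Finset.sum_congr rfl fun i _ => h2 i]
    simp [Finset.sum_const, Finset.card_univ, mul_comm, ht]
  have hdt : ∀ w, d w ≤ t := by
    intro w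
    calc d w ≤ (Finset.univ : Finset ι).card :=
          Finset.card_le_card (Finset.filter_subset _ _)
    _ = t := by simp [ht]
  -- key per-vertex inequality and existence of a covering clique
  have hkey : ∀ w, m + 1 ≤ (r-1) * d w + degC G' w + 1 := by
    intro w
    set NN : Finset (Fin (m+1)) :=
      Finset.univ.filter (fun x => x ≠ w ∧ ¬ G₀.Adj w x) with hNNdef
    have hNNmem : ∀ x, x ∈ NN ↔ (x ≠ w ∧ ¬ G₀.Adj w x) := by
      intro x
      simp [hNNdef]
    have h1 := card_nonnbr G₀ w NN hNNmem
    have h2 : NN.card ≤ (r-1) * d w := by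
      have hsub : NN ⊆
          (Finset.univ.filter (fun i => w ∈ S i)).biUnion (fun i => (S i).erase w) := by
        intro x hx
        rw [hNNmem] at hx
        obtain ⟨hxw, hnadj⟩ := hx
        rw [hG₀adj] at hnadj
        push_neg at hnadj
        obtain ⟨i, hwi, hxi⟩ := hnadj (Ne.symm hxw)
        simp only [Finset.mem_biUnion, Finset.mem_filter, Finset.mem_univ, true_and]
        exact ⟨i, hwi, Finset.mem_erase.mpr ⟨hxw, hxi⟩⟩
      calc NN.card
          ≤ ((Finset.univ.filter (fun i => w ∈ S i)).biUnion (fun i => (S i).erase w)).card :=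
            Finset.card_le_card hsub
        _ ≤ ∑ i ∈ Finset.univ.filter (fun i => w ∈ S i), ((S i).erase w).card :=
            Finset.card_biUnion_le
        _ ≤ ∑ i ∈ Finset.univ.filter (fun i => w ∈ S i), (r-1) := by
            apply Finset.sum_le_sum
            intro i hi
            simp only [Finset.mem_filter, Finset.mem_univ, true_and] at hi
            rw [Finset.card_erase_of_mem hi, hS i]
        _ = (r-1) * d w := by rw [Finset.sum_const, smul_eq_mul, mul_comm]
    have h3 := degC_mono hle w
    omega
  have hd1 : ∀ w, degC G' w + 2 ≤ m + 1 → 1 ≤ d w := by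
    intro w hw
    set NN : Finset (Fin (m+1)) :=
      Finset.univ.filter (fun x => x ≠ w ∧ ¬ G₀.Adj w x) with hNNdef
    have hNNmem : ∀ x, x ∈ NN ↔ (x ≠ w ∧ ¬ G₀.Adj w x) := by
      intro x
      simp [hNNdef]
    have h1 := card_nonnbr G₀ w NN hNNmem
    have h3 := degC_mono hle w
    have hpos : 0 < NN.card := by omega
    obtain ⟨x, hx⟩ := Finset.card_pos.mp hpos
    rw [hNNmem] at hx
    obtain ⟨hxw, hnadj⟩ := hx
    rw [hG₀adj] at hnadj
    push_neg at hnadj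
    obtain ⟨i, hwi, _⟩ := hnadj (Ne.symm hxw)
    rw [hd]
    refine Finset.card_pos.mpr ⟨i, ?_⟩
    simp [hwi]
  have hOre : ∀ u v : Fin (m+1), u ≠ v → ¬ G'.Adj u v →
      degC G' u + degC G' v ≤ m := fun u v h1 h2 => ore_bound hn3 G' hno' hmax u v h1 h2
  have hnontop : ∃ u v : Fin (m+1), u ≠ v ∧ ¬ G'.Adj u v := by
    by_contra hc
    push_neg at hc
    obtain ⟨σ, hσ⟩ := hamOrd_top hn3
    exact hno' ⟨σ, fun j => hc _ _ ((hσ j).ne)⟩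
  set P : Finset (Fin (m+1) × Fin (m+1)) :=
    Finset.univ.filter (fun p => p.1 ≠ p.2 ∧ ¬ G'.Adj p.1 p.2) with hP
  have hPne : P.Nonempty := by
    obtain ⟨u, v, h1, h2⟩ := hnontop
    exact ⟨(u, v), by simp [hP, h1, h2]⟩
  obtain ⟨p₀, hp₀P, hp₀max⟩ := Finset.exists_max_image P (fun p => degC G' p.1 + degC G' p.2) hPne
  simp only [hP, Finset.mem_filter, Finset.mem_univ, true_and] at hp₀P
  obtain ⟨u, v, huv, hnadj, hdle, hmaxsum⟩ :
      ∃ u v : Fin (m+1), u ≠ v ∧ ¬ G'.Adj u v ∧ degC G' u ≤ degC G' v ∧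
        ∀ a b : Fin (m+1), a ≠ b → ¬ G'.Adj a b →
          degC G' a + degC G' b ≤ degC G' u + degC G' v := by
    rcases le_total (degC G' p₀.1) (degC G' p₀.2) with h | h
    · exact ⟨p₀.1, p₀.2, hp₀P.1, hp₀P.2, h,
        fun a b h1 h2 => hp₀max (a, b) (by simp [hP, h1, h2])⟩
    · refine ⟨p₀.2, p₀.1, hp₀P.1.symm, fun hadj => hp₀P.2 hadj.symm, h, ?_⟩
      intro a b h1 h2
      have h3 := hp₀max (a, b) (by simp [hP, h1, h2])
      simp only at h3
      omega
  set i := degC G' u with hi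
  have hOreuv : degC G' u + degC G' v ≤ m := hOre u v huv hnadj
  have h2i : 2 * i + 1 ≤ m + 1 := by omega
  have hAt : m - i ≤ (r-1) * t := by
    have h1 := hkey u
    have h2 := hdt u
    have h3 : (r-1) * d u ≤ (r-1) * t := Nat.mul_le_mul_left _ h2
    omega
  by_cases hi0 : i = 0
  · have hA' : m ≤ (r-1) * t := by omega
    calc (m+1) * (m+1-1) = (m+1) * m := by rw [Nat.add_sub_cancel]
    _ = m * (m+1) := by ring
    _ ≤ ((r-1) * t) * (m + 1 + 2*r) := Nat.mul_le_mul hA' (by omega)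
    _ = t * (r-1) * (m + 1 + 2*r) := by ring
  · have hi1 : 1 ≤ i := by omega
    set W : Finset (Fin (m+1)) := Finset.univ.filter (fun w => w ≠ v ∧ ¬ G'.Adj v w) with hW
    have hWcard : W.card + degC G' v + 1 = m + 1 :=
      card_nonnbr G' v W (fun x => by simp [hW])
    have hWdeg : ∀ w ∈ W, degC G' w ≤ i := by
      intro w hw
      simp only [hW, Finset.mem_filter, Finset.mem_univ, true_and] at hw
      by_cases hwu : w = u
      · rw [hwu]
      · have := hmaxsum v w (Ne.symm hw.1) hw.2
        omega
    have hWbig : i ≤ W.card := by omega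
    obtain ⟨W₀, hW₀sub, hW₀card⟩ := Finset.exists_subset_card_eq hWbig
    set W' : Finset (Fin (m+1)) :=
      insert u (Finset.univ.filter (fun w => w ≠ u ∧ ¬ G'.Adj u w)) with hW'
    have hunotmem : u ∉ Finset.univ.filter (fun w => w ≠ u ∧ ¬ G'.Adj u w) := by simp
    have hW'card : W'.card + degC G' u = m + 1 := by
      have := card_nonnbr G' u (Finset.univ.filter (fun w => w ≠ u ∧ ¬ G'.Adj u w))
        (fun x => by simp)
      rw [hW', Finset.card_insert_of_notMem hunotmem]
      omega
    have hW'deg : ∀ w ∈ W', degC G' w + i + 1 ≤ m + 1 := by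
      intro w hw
      rw [hW', Finset.mem_insert] at hw
      rcases hw with rfl | hw
      · omega
      · simp only [Finset.mem_filter, Finset.mem_univ, true_and] at hw
        have := hOre u w (Ne.symm hw.1) hw.2
        omega
    set W₁ : Finset (Fin (m+1)) := W' \ W₀ with hW₁
    have hW₁card : m + 1 - 2*i ≤ W₁.card := by
      have h1 : W'.card - W₀.card ≤ W₁.card := Finset.le_card_sdiff _ _
      omega
    have hdisj : Disjoint W₀ W₁ := Finset.disjoint_sdiff
    have hbW₀ : ∀ w ∈ W₀, m - i ≤ (r-1) * d w := by
      intro w hw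
      have h1 := hkey w
      have h2 := hWdeg w (hW₀sub hw)
      omega
    set M := max i (r-1) with hM
    have hbW₁ : ∀ w ∈ W₁, M ≤ (r-1) * d w := by
      intro w hw
      have hw' : w ∈ W' := (Finset.mem_sdiff.mp hw).1
      have h1 := hkey w
      have h2 := hW'deg w hw'
      apply max_le
      · omega
      · have h3 : 1 ≤ d w := hd1 w (by omega)
        calc r - 1 = (r-1) * 1 := by omega
        _ ≤ (r-1) * d w := Nat.mul_le_mul_left _ h3
    have hsumbound : i * (m - i) + (m + 1 - 2*i) * M ≤ r * ((r-1) * t) := by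
      have h1 : ∑ w ∈ W₀, (r-1) * d w + ∑ w ∈ W₁, (r-1) * d w ≤
          ∑ w : Fin (m+1), (r-1) * d w := by
        rw [← Finset.sum_union hdisj]
        exact Finset.sum_le_sum_of_subset (Finset.subset_univ _)
      have h2 : i * (m - i) ≤ ∑ w ∈ W₀, (r-1) * d w := by
        have := Finset.card_nsmul_le_sum W₀ (fun w => (r-1) * d w) (m - i) hbW₀
        rw [smul_eq_mul, hW₀card] at this
        exact this
      have h3 : (m + 1 - 2*i) * M ≤ ∑ w ∈ W₁, (r-1) * d w := by
        have := Finset.card_nsmul_le_sum W₁ (fun w => (r-1) * d w) M hbW₁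
        rw [smul_eq_mul] at this
        calc (m + 1 - 2*i) * M ≤ W₁.card * M := Nat.mul_le_mul_right _ hW₁card
        _ ≤ ∑ w ∈ W₁, (r-1) * d w := this
      have h4 : ∑ w : Fin (m+1), (r-1) * d w = r * ((r-1) * t) := by
        rw [← Finset.mul_sum, hsum]
        ring
      omega
    -- final arithmetic over ℤ
    have him : i ≤ m := by omega
    have h2im : 2*i ≤ m + 1 := by omega
    have hr1 : 1 ≤ r := by omega
    have hAZ : ((m:ℤ)+1) - 1 - i ≤ ((t:ℤ) * ((r:ℤ)-1)) := by
      zify [him, hr1] at hAt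
      linarith
    rw [show (m+1) * (m+1-1) = (m+1) * m by rw [Nat.add_sub_cancel]]
    zify [hr1]
    rcases le_or_gt i (r-1) with hcase | hcase
    · have hMval : M = r - 1 := max_eq_right hcase
      rw [hMval] at hsumbound
      zify [him, h2im, hr1] at hsumbound
      have := arith_case1 ((m:ℤ)+1) r i ((t:ℤ)*((r:ℤ)-1)) (by exact_mod_cast hr)
        (by exact_mod_cast hrn) (by exact_mod_cast hi1) (by exact_mod_cast h2i)
        hAZ (by linarith) (by zify [hr1] at hcase; linarith)
      linarith
    · have hcase' : r - 1 ≤ i := by omega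
      have hMval : M = i := max_eq_left hcase'
      rw [hMval] at hsumbound
      zify [him, h2im, hr1] at hsumbound
      have := arith_case2 ((m:ℤ)+1) r i ((t:ℤ)*((r:ℤ)-1)) (by exact_mod_cast hr)
        (by exact_mod_cast hrn) (by exact_mod_cast hi1) (by exact_mod_cast h2i)
        hAZ (by linarith) (by zify [hr1] at hcase'; linarith)
      linarith

end Counting


section Glue
open SimpleGraph Finset

lemma sum_x {r : ℕ} (hr : 3 ≤ r) :
    ∑ i : Fin (r-1), (if (i:ℕ) = 0 then 2 else 1) = r := by
  have h1 : ∀ i : Fin (r-1), (if (i:ℕ) = 0 then 2 else 1) =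
      1 + (if i = (⟨0, by omega⟩ : Fin (r-1)) then 1 else 0) := by
    intro i
    have : ((i:ℕ) = 0) ↔ (i = (⟨0, by omega⟩ : Fin (r-1))) := by
      rw [Fin.ext_iff]
    by_cases h : (i:ℕ) = 0
    · rw [if_pos h, if_pos (this.mp h)]
    · rw [if_neg h, if_neg (fun hh => h (this.mpr hh))]
  rw [Finset.sum_congr rfl fun i _ => h1 i, Finset.sum_add_distrib]
  rw [Finset.sum_ite_eq' Finset.univ (⟨0, by omega⟩ : Fin (r-1)) (fun _ => 1)]
  simp only [Finset.mem_univ, if_true, Finset.sum_const, Finset.card_univ,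
    Fintype.card_fin, smul_eq_mul, mul_one]
  omega

lemma real_bound {n r t : ℕ} (hr : 3 ≤ r) (hrn : r ≤ n)
    (h : n * (n-1) ≤ t * (r-1) * (n + 2*r)) :
    (n : ℝ) * ((n:ℝ) - 1) / (((n:ℝ) + 2*r) * ((r:ℝ) - 1)) ≤ (t : ℝ) := by
  have hrR : (3:ℝ) ≤ (r:ℝ) := by exact_mod_cast hr
  have hnR : (r:ℝ) ≤ (n:ℝ) := by exact_mod_cast hrn
  have hd : (0:ℝ) < ((n:ℝ) + 2*r) * ((r:ℝ) - 1) := by nlinarith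
  rw [div_le_iff₀ hd]
  have h' : ((n:ℝ)) * ((n:ℝ)-1) ≤ (t:ℝ) * ((r:ℝ)-1) * ((n:ℝ) + 2*r) := by
    have hcast := (Nat.cast_le (α := ℝ)).mpr h
    push_cast [Nat.cast_sub (show 1 ≤ n by omega), Nat.cast_sub (show 1 ≤ r by omega)] at hcast
    convert hcast using 2 <;> push_cast <;> ring
  nlinarith [h']

/-- the blocking condition extracted from a valid family `F` for `x = (2,1,…,1)`. -/
lemma blocked_of_family {m r : ℕ} (hr : 3 ≤ r) (hrn : r ≤ m + 1)
    (F : Set (Finset (Fin (m+1))))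
    (hacc : ∀ c : ZMod (m+1) ≃ Fin (m+1),
      ¬ IsXAcceptable (fun i : Fin (r - 1) => if (i : ℕ) = 0 then 2 else 1) F c)
    (σ : ZMod (m+1) ≃ Fin (m+1)) :
    ∃ j : ZMod (m+1), ∃ A ∈ F, σ j ∈ A ∧ σ (j+1) ∈ A := by
  have h := not_not.mp (hacc σ)
  obtain ⟨tt, hU⟩ := h
  set i₀ : Fin (r-1) := ⟨0, by omega⟩ with hi₀
  refine ⟨tt i₀ + 1, _, hU, ?_, ?_⟩
  · apply Finset.mem_biUnion.mpr
    refine ⟨i₀, Finset.mem_univ _, ?_⟩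
    show σ (tt i₀ + 1) ∈ cycInterval σ (tt i₀) 2
    rw [cycInterval]
    apply Finset.mem_image.mpr
    refine ⟨0, by norm_num, ?_⟩
    congr 1
    all_goals (push_cast; ring)
  · apply Finset.mem_biUnion.mpr
    refine ⟨i₀, Finset.mem_univ _, ?_⟩
    show σ (tt i₀ + 1 + 1) ∈ cycInterval σ (tt i₀) 2
    rw [cycInterval]
    apply Finset.mem_image.mpr
    refine ⟨1, by norm_num, ?_⟩
    congr 1
    all_goals (push_cast; ring)

/-- The family of all `r`-subsets destroys all Hamilton cycles;
this shows the defining set of `mxn` is nonempty. -/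
lemma mxn_set_nonempty {m r : ℕ} (hr : 3 ≤ r) (hrn : r ≤ m + 1) :
    ∃ mm : ℕ, mm ∈ {mm : ℕ | ∃ F : Set (Finset (Fin (m+1))),
      (∀ A ∈ F, A.card = ∑ i : Fin (r-1), (if ((i : Fin (r-1)):ℕ) = 0 then 2 else 1)) ∧
      F.ncard = mm ∧
      ∀ c : ZMod (m+1) ≃ Fin (m+1),
        ¬ IsXAcceptable (fun i : Fin (r - 1) => if (i : ℕ) = 0 then 2 else 1) F c} := by
  haveI : NeZero (m+1) := ⟨by omega⟩
  set Fall : Set (Finset (Fin (m+1))) := {A | A.card = r} with hFall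
  refine ⟨Fall.ncard, Fall, ?_, rfl, ?_⟩
  · intro A hA
    rw [sum_x hr]
    exact hA
  · intro c
    rw [IsXAcceptable, not_not]
    set tt : Fin (r-1) → ZMod (m+1) :=
      fun i => if (i:ℕ) = 0 then 0 else ((i:ℕ) : ZMod (m+1)) + 1 with htt
    refine ⟨tt, ?_⟩
    have hinj : ∀ a b : ℕ, a < m+1 → b < m+1 →
        ((a : ZMod (m+1)) = (b : ZMod (m+1))) → a = b := by
      intro a b ha hb hab
      have := congrArg ZMod.val hab
      rwa [ZMod.val_cast_of_lt ha, ZMod.val_cast_of_lt hb] at this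
    set g : ℕ → Fin (m+1) := fun j => c ((j : ZMod (m+1)) + 1) with hg
    set T : Finset (Fin (m+1)) := (Finset.range r).image g with hT
    have claim1 : (Finset.univ.biUnion fun i : Fin (r-1) =>
        cycInterval c (tt i) ((fun i : Fin (r-1) => if (i:ℕ) = 0 then 2 else 1) i)) = T := by
      apply Finset.Subset.antisymm
      · intro w hw
        obtain ⟨i, -, hi⟩ := Finset.mem_biUnion.mp hw
        by_cases h0 : (i:ℕ) = 0
        · have e1 : tt i = 0 := by simp [htt, h0]
          have e2 : ((fun i : Fin (r-1) => if (i:ℕ) = 0 then 2 else 1) i) = 2 := by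
            simp [h0]
          rw [e1, e2, cycInterval] at hi
          obtain ⟨k, hk, hck⟩ := Finset.mem_image.mp hi
          rw [Finset.mem_range] at hk
          refine Finset.mem_image.mpr ⟨k, Finset.mem_range.mpr (by omega), ?_⟩
          rw [← hck, hg]
          exact congrArg c (by push_cast; ring)
        · have e1 : tt i = ((i:ℕ) : ZMod (m+1)) + 1 := by simp [htt, h0]
          have e2 : ((fun i : Fin (r-1) => if (i:ℕ) = 0 then 2 else 1) i) = 1 := by
            simp [h0]
          rw [e1, e2, cycInterval] at hi
          obtain ⟨k, hk, hck⟩ := Finset.mem_image.mp hi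
          rw [Finset.mem_range, Nat.lt_one_iff] at hk
          subst hk
          have hilt : (i:ℕ) < r - 1 := i.isLt
          refine Finset.mem_image.mpr ⟨(i:ℕ) + 1, Finset.mem_range.mpr (by omega), ?_⟩
          rw [← hck, hg]
          exact congrArg c (by push_cast; ring)
      · intro w hw
        obtain ⟨j, hj, hcj⟩ := Finset.mem_image.mp hw
        rw [Finset.mem_range] at hj
        apply Finset.mem_biUnion.mpr
        by_cases h0 : j ≤ 1
        · refine ⟨⟨0, by omega⟩, Finset.mem_univ _, ?_⟩
          have e1 : tt ⟨0, by omega⟩ = 0 := by simp [htt]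
          have e2 : ((fun i : Fin (r-1) => if (i:ℕ) = 0 then 2 else 1) ⟨0, by omega⟩) = 2 := by
            simp
          rw [e1, e2, cycInterval]
          refine Finset.mem_image.mpr ⟨j, Finset.mem_range.mpr (by omega), ?_⟩
          rw [← hcj, hg]
          exact congrArg c (by push_cast; ring)
        · refine ⟨⟨j - 1, by omega⟩, Finset.mem_univ _, ?_⟩
          have hne : ((⟨j - 1, by omega⟩ : Fin (r-1)) : ℕ) = j - 1 := rfl
          have e1 : tt ⟨j - 1, by omega⟩ = ((j - 1 : ℕ) : ZMod (m+1)) + 1 := by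
            simp only [htt, hne]
            rw [if_neg (by omega : ¬ (j - 1) = 0)]
          have e2 : ((fun i : Fin (r-1) => if (i:ℕ) = 0 then 2 else 1)
              (⟨j - 1, by omega⟩ : Fin (r-1))) = 1 := by
            simp only [hne]
            rw [if_neg (by omega : ¬ (j - 1) = 0)]
          rw [e1, e2, cycInterval]
          refine Finset.mem_image.mpr ⟨0, Finset.mem_range.mpr (by omega), ?_⟩
          rw [← hcj, hg]
          exact congrArg c (by push_cast [Nat.cast_sub (show 1 ≤ j by omega)]; ring)
    have claim2 : T.card = r := by
      rw [hT, Finset.card_image_of_injOn, Finset.card_range]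
      intro a ha b hb hab
      rw [Finset.mem_coe, Finset.mem_range] at ha hb
      have h1 : ((a : ZMod (m+1)) + 1) = ((b : ZMod (m+1)) + 1) := c.injective hab
      exact hinj a b (by omega) (by omega) (add_right_cancel h1)
    show (Finset.univ.biUnion fun i : Fin (r-1) =>
        cycInterval c (tt i) ((fun i : Fin (r-1) => if (i:ℕ) = 0 then 2 else 1) i)) ∈ Fall
    rw [hFall, Set.mem_setOf_eq, claim1]
    exact claim2

end Glue

/-- **Theorem (lower bound for `x = (2,1,…,1)`).**  Let `r ≥ 3` and `n ≥ r`.  If `t`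
copies of `K_r` can be deleted from `K_n` (i.e. all edges inside each of `t` chosen
`r`-element vertex subsets are removed) so that the resulting graph is not Hamiltonian,
then `t ≥ n(n−1)/((n+2r)(r−1))`.  Equivalently, for `x = (2,1,…,1)` with `r − 2` ones,
`m(x,n) ≥ n(n−1)/((n+2r)(r−1))`. -/
theorem lower_bound_two_one_one (r n t : ℕ) (hr : 3 ≤ r) (hn : r ≤ n)
    (S : Fin t → Finset (Fin n)) (hS : ∀ i, (S i).card = r)
    (G : SimpleGraph (Fin n))
    (hG : ∀ a b : Fin n, G.Adj a b ↔ a ≠ b ∧ ¬ ∃ i, a ∈ S i ∧ b ∈ S i)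
    (hnotHam : ¬ ∃ (v : Fin n) (p : G.Walk v v), p.IsHamiltonianCycle) :
    (n : ℝ) * ((n : ℝ) - 1) / (((n : ℝ) + 2 * r) * ((r : ℝ) - 1)) ≤ (t : ℝ) ∧
    (n : ℝ) * ((n : ℝ) - 1) / (((n : ℝ) + 2 * r) * ((r : ℝ) - 1)) ≤
      (mxn (fun i : Fin (r - 1) => if (i : ℕ) = 0 then 2 else 1) n : ℝ) := by
  obtain ⟨m, rfl⟩ : ∃ m, n = m + 1 := ⟨n - 1, by omega⟩
  have hn3 : 3 ≤ m + 1 := by omega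
  haveI : NeZero (m+1) := ⟨by omega⟩
  have hblock1 : ∀ σ : ZMod (m+1) ≃ Fin (m+1),
      ∃ j : ZMod (m+1), ∃ i, σ j ∈ S i ∧ σ (j+1) ∈ S i := by
    intro σ
    by_contra hcon
    push_neg at hcon
    apply hnotHam
    apply ham_of_good hn3 σ
    intro j
    rw [hG]
    constructor
    · intro he
      have hj := σ.injective he
      have h1 : ((1:ℕ) : ZMod (m+1)) = 0 := by push_cast; linear_combination -hj
      rw [ZMod.natCast_eq_zero_iff] at h1
      have := Nat.le_of_dvd (by omega) h1
      omega
    · rintro ⟨i, h1, h2⟩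
      exact hcon j i h1 h2
  have hnat1 := main_count hr hn S hS hblock1
  rw [Fintype.card_fin] at hnat1
  refine ⟨real_bound hr hn hnat1, ?_⟩
  -- part 2: the mxn bound
  have hne := mxn_set_nonempty (m := m) hr hn
  have hmem : mxn (fun i : Fin (r - 1) => if (i : ℕ) = 0 then 2 else 1) (m+1) ∈
      {mm : ℕ | ∃ F : Set (Finset (Fin (m+1))),
        (∀ A ∈ F, A.card = ∑ i : Fin (r-1),
          (if ((i : Fin (r-1)):ℕ) = 0 then 2 else 1)) ∧
        F.ncard = mm ∧
        ∀ c : ZMod (m+1) ≃ Fin (m+1),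
          ¬ IsXAcceptable (fun i : Fin (r - 1) => if (i : ℕ) = 0 then 2 else 1) F c} := by
    obtain ⟨mm, hmm⟩ := hne
    exact Nat.sInf_mem ⟨mm, hmm⟩
  obtain ⟨F, hFcard, hFn, hFacc⟩ := hmem
  have hFfin : F.Finite := Set.toFinite F
  set FF : Finset (Finset (Fin (m+1))) := hFfin.toFinset with hFF
  have hScard : ∀ A : {A // A ∈ FF}, (A.val).card = r := by
    intro A
    have hmemF : A.val ∈ F := (Set.Finite.mem_toFinset hFfin).mp A.prop
    rw [hFcard A.val hmemF, sum_x hr]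
  have hblock2 : ∀ σ : ZMod (m+1) ≃ Fin (m+1),
      ∃ j : ZMod (m+1), ∃ A : {A // A ∈ FF}, σ j ∈ A.val ∧ σ (j+1) ∈ A.val := by
    intro σ
    obtain ⟨j, A, hA, h1, h2⟩ := blocked_of_family hr hn F hFacc σ
    exact ⟨j, ⟨A, (Set.Finite.mem_toFinset hFfin).mpr hA⟩, h1, h2⟩
  have hnat2 := main_count hr hn (fun A : {A // A ∈ FF} => A.val) hScard hblock2
  have hcardeq : Fintype.card {A // A ∈ FF} =
      mxn (fun i : Fin (r - 1) => if (i : ℕ) = 0 then 2 else 1) (m+1) := by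
    rw [Fintype.card_coe]
    rw [show FF.card = F.ncard from (Set.ncard_eq_toFinset_card F hFfin).symm, hFn]
  rw [hcardeq] at hnat2
  exact real_bound hr hn hnat2
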